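/- arXiv:2305.08350 — 2 statements merged into one kernel-verified Lean document; each statement's English description precedes it below -/
import Mathlib

section
/- Let (Zₙ) be a sequence of real random variables adapted to a filtration (Hₙ), with conditional means μₙ = E[Zₙ | H_{n−1}] and conditional cumulant generating functions ψₙ(λ) = log E[exp(λ(Zₙ − μₙ)) | H_{n−1}] assumed finite for all λ. Then for all x ≥ 0 and λ ≥ 0, with probability at least 1 − e^{−x}, for every K ∈ ℕ simultaneously: ∑_{i=1}^K λ·Zᵢ ≤ x + ∑_{i=1}^K (λ·μᵢ + ψᵢ(λ)). -/
open MeasureTheory Finset Filter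

lemma aux_jensen_exp {Ω : Type*} {m0 : MeasurableSpace Ω} (μ : Measure Ω)
    [IsProbabilityMeasure μ] {m : MeasurableSpace Ω} (hm : m ≤ m0) {Z : Ω → ℝ}
    (hZ : Integrable Z μ) (hexp : Integrable (fun ω => Real.exp (Z ω)) μ) :
    (fun ω => Real.exp ((μ[Z|m]) ω)) ≤ᵐ[μ] μ[fun ω => Real.exp (Z ω)|m] := by
  have key : ∀ q : ℚ, (fun ω => Real.exp q * (1 + (μ[Z|m]) ω - q)) ≤ᵐ[μ]
      μ[fun ω => Real.exp (Z ω)|m] := by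
    intro q
    have h1 : (fun ω => Real.exp q * (1 + Z ω - q)) = (fun _ : Ω => Real.exp q * (1 - q)) +
        (Real.exp q : ℝ) • Z := by
      funext ω; simp [smul_eq_mul]; ring
    have hint1 : Integrable (fun ω => Real.exp q * (1 + Z ω - q)) μ := by
      rw [h1]; exact (integrable_const _).add (hZ.smul _)
    have hmono : μ[fun ω => Real.exp q * (1 + Z ω - q)|m] ≤ᵐ[μ] μ[fun ω => Real.exp (Z ω)|m] := by
      refine condExp_mono hint1 hexp (Filter.Eventually.of_forall fun ω => ?_)
      have h2 : (1 : ℝ) + (Z ω - q) ≤ Real.exp (Z ω - q) := by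
        have := Real.add_one_le_exp (Z ω - q); linarith
      calc Real.exp q * (1 + Z ω - q) = Real.exp q * (1 + (Z ω - q)) := by ring
        _ ≤ Real.exp q * Real.exp (Z ω - q) :=
            mul_le_mul_of_nonneg_left h2 (Real.exp_pos _).le
        _ = Real.exp (Z ω) := by rw [← Real.exp_add]; ring_nf
    have heq : μ[fun ω => Real.exp q * (1 + Z ω - q)|m]
        =ᵐ[μ] fun ω => Real.exp q * (1 + (μ[Z|m]) ω - q) := by
      rw [h1]
      refine (condExp_add (integrable_const _) (hZ.smul _) m).trans ?_
      have h3 := condExp_smul (μ := μ) (m := m) (Real.exp q : ℝ) Z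
      filter_upwards [h3] with ω hω
      simp only [Pi.add_apply, Pi.smul_apply, smul_eq_mul] at *
      rw [condExp_const hm, hω]; ring
    filter_upwards [heq.symm.le.trans hmono] with ω hω using hω
  have key2 : ∀ᵐ ω ∂μ, ∀ q : ℚ, Real.exp q * (1 + (μ[Z|m]) ω - q) ≤
      (μ[fun ω => Real.exp (Z ω)|m]) ω := ae_all_iff.2 key
  filter_upwards [key2] with ω hω
  set t : ℝ := (μ[Z|m]) ω with ht
  set C : ℝ := (μ[fun ω => Real.exp (Z ω)|m]) ω
  -- choose rationals q n → t and pass to the limit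
  have hq : ∀ n : ℕ, ∃ q : ℚ, |t - q| < 1 / (n + 1) := fun n =>
    exists_rat_near t (by positivity)
  choose q hqn using hq
  have htend : Tendsto (fun n => (q n : ℝ)) atTop (nhds t) := by
    rw [tendsto_iff_dist_tendsto_zero]
    refine squeeze_zero (fun n => dist_nonneg) (fun n => ?_) tendsto_one_div_add_atTop_nhds_zero_nat
    rw [Real.dist_eq, abs_sub_comm]
    exact (hqn n).le
  have hcont : Tendsto (fun n => Real.exp (q n) * (1 + t - (q n : ℝ))) atTop
      (nhds (Real.exp t * (1 + t - t))) := by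
    have : Continuous fun s : ℝ => Real.exp s * (1 + t - s) := by continuity
    exact (this.continuousAt.tendsto).comp htend
  have : Real.exp t * (1 + t - t) ≤ C :=
    le_of_tendsto hcont (Filter.Eventually.of_forall fun n => hω (q n))
  simpa using this


lemma aux_pullout {Ω : Type*} {m : MeasurableSpace Ω} {m0 : MeasurableSpace Ω}
    (hm : m ≤ m0) (μ : Measure Ω)
    [IsProbabilityMeasure μ] {f : Ω → ℝ}
    (hfm : Measurable f) (hf : Integrable f μ) (hf0 : 0 ≤ f)
    {h : Ω → ENNReal} (hh : Measurable[m] h) :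
    ∫⁻ ω, h ω * ENNReal.ofReal (f ω) ∂μ = ∫⁻ ω, h ω * ENNReal.ofReal ((μ[f|m]) ω) ∂μ := by
  have hcm : Measurable[m0] (μ[f|m]) :=
    (stronglyMeasurable_condExp (m := m)).measurable.mono hm le_rfl
  set ν₁ : @Measure Ω m0 := μ.withDensity (fun ω => ENNReal.ofReal (f ω)) with hν₁
  set ν₂ : @Measure Ω m0 := μ.withDensity (fun ω => ENNReal.ofReal ((μ[f|m]) ω)) with hν₂
  have hmeq : ν₁.trim hm = ν₂.trim hm := by
    refine @Measure.ext Ω m _ _ (fun s hs => ?_)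
    rw [trim_measurableSet_eq hm hs, trim_measurableSet_eq hm hs, hν₁, hν₂,
      withDensity_apply _ (hm s hs), withDensity_apply _ (hm s hs)]
    have e1 : ∫⁻ ω in s, ENNReal.ofReal (f ω) ∂μ = ENNReal.ofReal (∫ ω in s, f ω ∂μ) :=
      (ofReal_integral_eq_lintegral_ofReal hf.integrableOn
        (Filter.Eventually.of_forall fun ω => hf0 ω)).symm
    have e2 : ∫⁻ ω in s, ENNReal.ofReal ((μ[f|m]) ω) ∂μ
        = ENNReal.ofReal (∫ ω in s, (μ[f|m]) ω ∂μ) :=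
      (ofReal_integral_eq_lintegral_ofReal integrable_condExp.integrableOn
        (ae_restrict_of_ae (condExp_nonneg (Filter.Eventually.of_forall fun ω => hf0 ω)))).symm
    rw [e1, e2, setIntegral_condExp hm hf hs]
  have hhm0 : Measurable[m0] h := hh.mono hm le_rfl
  calc ∫⁻ ω, h ω * ENNReal.ofReal (f ω) ∂μ
      = ∫⁻ ω, h ω ∂ν₁ := by
        rw [hν₁, lintegral_withDensity_eq_lintegral_mul μ (hfm.ennreal_ofReal) hhm0]
        simp [mul_comm]
    _ = ∫⁻ ω, h ω ∂(ν₁.trim hm) := (lintegral_trim hm hh).symm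
    _ = ∫⁻ ω, h ω ∂(ν₂.trim hm) := by rw [hmeq]
    _ = ∫⁻ ω, h ω ∂ν₂ := lintegral_trim hm hh
    _ = ∫⁻ ω, h ω * ENNReal.ofReal ((μ[f|m]) ω) ∂μ := by
        rw [hν₂, lintegral_withDensity_eq_lintegral_mul μ (hcm.ennreal_ofReal) hhm0]
        simp [mul_comm]

/-- Uniform exponential-martingale concentration (Lemma 4 of Russo & Van Roy):
with probability at least `1 - e^{-x}`, simultaneously for all `K`,
`∑_{i=1}^K λ Z_i ≤ x + ∑_{i=1}^K (λ μ_i + ψ_i(λ))`.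
Here `Z n`, `mu n`, `ψ n` stand for `Z_{n+1}`, `μ_{n+1}`, `ψ_{n+1}`, conditioned on `ℱ n`. -/
theorem stmt_9 {Ω : Type*} {m0 : MeasurableSpace Ω} (μ : Measure Ω) [IsProbabilityMeasure μ]
    (ℱ : Filtration ℕ m0) (Z mu : ℕ → Ω → ℝ) (ψ : ℕ → ℝ → Ω → ℝ)
    (hadapted : ∀ n, Measurable[ℱ (n + 1)] (Z n))
    (hint : ∀ n, ∀ lam : ℝ, Integrable (fun ω => Real.exp (lam * Z n ω)) μ)
    (hmu : ∀ n, mu n =ᵐ[μ] μ[Z n | ℱ n])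
    (hψ : ∀ n, ∀ lam : ℝ, ψ n lam =ᵐ[μ]
      fun ω => Real.log ((μ[fun ω' => Real.exp (lam * (Z n ω' - mu n ω')) | ℱ n]) ω))
    (x lam : ℝ) (hx : 0 ≤ x) (hlam : 0 ≤ lam) :
    ENNReal.ofReal (1 - Real.exp (-x)) ≤
      μ {ω | ∀ K : ℕ, ∑ i ∈ range K, lam * Z i ω ≤
        x + ∑ i ∈ range K, (lam * mu i ω + ψ i lam ω)} := by
  classical
  have hle : ∀ n, ℱ n ≤ m0 := fun n => ℱ.le n
  have hZm : ∀ n, Measurable (Z n) := fun n => (hadapted n).mono (hle (n + 1)) le_rfl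
  -- integrability of Z n
  have hZint : ∀ n, Integrable (Z n) μ := by
    intro n
    have h1 := hint n 1
    have h2 := hint n (-1)
    simp only [one_mul, neg_one_mul] at h1 h2
    refine (h1.add h2).mono' (hZm n).aestronglyMeasurable ?_
    refine Eventually.of_forall fun ω => ?_
    rw [Real.norm_eq_abs]
    have e1 := Real.add_one_le_exp (Z n ω)
    have e2 := Real.add_one_le_exp (-Z n ω)
    have p1 := Real.exp_pos (Z n ω)
    have p2 := Real.exp_pos (-Z n ω)
    simp only [Pi.add_apply]
    rcases abs_cases (Z n ω) with ⟨h, _⟩ | ⟨h, _⟩ <;> rw [h] <;> nlinarith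
  -- notation
  set mu' : ℕ → Ω → ℝ := fun n => μ[Z n | ℱ n] with hmu'def
  have hmu'm : ∀ n, Measurable (mu' n) := fun n =>
    (stronglyMeasurable_condExp (m := ℱ n)).measurable.mono (hle n) le_rfl
  have hmu'mF : ∀ n, Measurable[ℱ n] (mu' n) := fun n =>
    (stronglyMeasurable_condExp (m := ℱ n)).measurable
  have hmu'int : ∀ n, Integrable (mu' n) μ := fun n => integrable_condExp
  set Y : ℕ → Ω → ℝ := fun n ω => Real.exp (lam * (Z n ω - mu' n ω)) with hYdef
  have hYm : ∀ n, Measurable (Y n) := fun n =>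
    (((hZm n).sub (hmu'm n)).const_mul lam).exp
  have hYpos : ∀ n ω, 0 < Y n ω := fun n ω => Real.exp_pos _
  -- integrability of exp (c * mu' n) for any c
  have hexpmu : ∀ n, ∀ c : ℝ, Integrable (fun ω => Real.exp (c * mu' n ω)) μ := by
    intro n c
    have hcz : Integrable (fun ω => c * Z n ω) μ := (hZint n).const_mul c
    have hj := aux_jensen_exp μ (hle n) hcz (by simpa using hint n c)
    have hsm := condExp_smul (μ := μ) (m := ℱ n) c (Z n)
    refine Integrable.mono' (integrable_condExp (f := fun ω => Real.exp (c * Z n ω)) (m := ℱ n))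
      (((hmu'm n).const_mul c).exp).aestronglyMeasurable ?_
    filter_upwards [hj, hsm] with ω h1 h2
    rw [Real.norm_eq_abs, abs_of_pos (Real.exp_pos _)]
    have hsm' : (μ[fun ω => c * Z n ω|ℱ n]) ω = c * mu' n ω := by
      have hfe : (fun ω => c * Z n ω) = c • Z n := by funext ω; simp [smul_eq_mul]
      rw [hfe, h2]; simp [smul_eq_mul]
      exact Or.inl rfl
    rw [← hsm']
    exact h1
  -- integrability of Y n
  have hYint : ∀ n, Integrable (Y n) μ := by
    intro n
    have hf2 : MemLp (fun ω => Real.exp (lam * Z n ω)) 2 μ := by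
      rw [memLp_two_iff_integrable_sq ((hZm n).const_mul lam).exp.aestronglyMeasurable]
      have := hint n (2 * lam)
      refine this.congr ?_
      refine Eventually.of_forall fun ω => ?_
      simp only [pow_two, ← Real.exp_add]
      ring_nf
    have hφ2 : MemLp (fun ω => Real.exp (-lam * mu' n ω)) 2 μ := by
      rw [memLp_two_iff_integrable_sq ((hmu'm n).const_mul (-lam)).exp.aestronglyMeasurable]
      have := hexpmu n (-(2 * lam))
      refine this.congr ?_
      refine Eventually.of_forall fun ω => ?_
      simp only [pow_two, ← Real.exp_add]
      ring_nf
    have hmul : MemLp ((fun ω => Real.exp (-lam * mu' n ω)) •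
        (fun ω => Real.exp (lam * Z n ω))) 1 μ := by
      exact hf2.smul hφ2
    have := memLp_one_iff_integrable.mp hmul
    refine this.congr (Eventually.of_forall fun ω => ?_)
    simp only [Pi.smul_apply, Pi.mul_apply, smul_eq_mul, hYdef, ← Real.exp_add]
    congr 1
    ring
  -- G and its positivity
  set G : ℕ → Ω → ℝ := fun n => μ[Y n | ℱ n] with hGdef
  have hGmF : ∀ n, Measurable[ℱ n] (G n) := fun n =>
    (stronglyMeasurable_condExp (m := ℱ n)).measurable
  have hGm : ∀ n, Measurable (G n) := fun n => (hGmF n).mono (hle n) le_rfl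
  have hGone : ∀ n, (fun _ : Ω => (1 : ℝ)) ≤ᵐ[μ] G n := by
    intro n
    have hlin : Integrable (fun ω => 1 + lam * (Z n ω - mu' n ω)) μ := by
      have : (fun ω => 1 + lam * (Z n ω - mu' n ω)) =
          (fun _ : Ω => (1 : ℝ)) + lam • (Z n - mu' n) := by
        funext ω; simp [smul_eq_mul]
      rw [this]
      exact (integrable_const _).add (((hZint n).sub (hmu'int n)).smul lam)
    have hmono : μ[fun ω => 1 + lam * (Z n ω - mu' n ω)|ℱ n] ≤ᵐ[μ] G n := by
      refine condExp_mono hlin (hYint n) (Eventually.of_forall fun ω => ?_)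
      have := Real.add_one_le_exp (lam * (Z n ω - mu' n ω))
      simp only [hYdef]
      linarith
    have heq : μ[fun ω => 1 + lam * (Z n ω - mu' n ω)|ℱ n] =ᵐ[μ] fun _ => (1 : ℝ) := by
      have h1 : (fun ω => 1 + lam * (Z n ω - mu' n ω)) =
          (fun _ : Ω => (1 : ℝ)) + lam • (Z n - mu' n) := by
        funext ω; simp [smul_eq_mul]
      rw [h1]
      refine (condExp_add (integrable_const _)
        (((hZint n).sub (hmu'int n)).smul lam) (ℱ n)).trans ?_
      have h2 := condExp_smul (μ := μ) (m := ℱ n) lam (Z n - mu' n)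
      have h3 := condExp_sub (μ := μ) (m := ℱ n) (hZint n) (hmu'int n)
      have h4 : μ[mu' n|ℱ n] = mu' n :=
        condExp_of_stronglyMeasurable (hle n) stronglyMeasurable_condExp integrable_condExp
      filter_upwards [h2, h3] with ω hω2 hω3
      simp only [Pi.add_apply, Pi.smul_apply, smul_eq_mul] at *
      rw [condExp_const (hle n), hω2]
      simp only [hω3, Pi.sub_apply, h4]
      ring
    filter_upwards [hmono, heq] with ω h1 h2
    rw [← h2]
    exact h1
  -- clamped version g
  set g : ℕ → Ω → ℝ := fun n ω => if 0 < G n ω then G n ω else 1 with hgdef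
  have hgpos : ∀ n ω, 0 < g n ω := by
    intro n ω
    simp only [hgdef]
    split_ifs with h
    · exact h
    · norm_num
  have hgmF : ∀ n, Measurable[ℱ n] (g n) := by
    intro n
    exact Measurable.ite (measurableSet_lt (@measurable_const ℝ Ω _ (ℱ n) 0) (hGmF n))
      (hGmF n) measurable_const
  have hgm : ∀ n, Measurable (g n) := fun n => (hgmF n).mono (hle n) le_rfl
  have hgae : ∀ n, g n =ᵐ[μ] G n := by
    intro n
    filter_upwards [hGone n] with ω hω
    simp only [hgdef]
    rw [if_pos (lt_of_lt_of_le one_pos hω)]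
  have hgone : ∀ n, ∀ᵐ ω ∂μ, 1 ≤ g n ω := by
    intro n
    filter_upwards [hGone n, hgae n] with ω h1 h2
    rw [h2]; exact h1
  -- the martingale M
  set M : ℕ → Ω → ℝ := fun K ω => ∏ i ∈ range K, (Y i ω / g i ω) with hMdef
  have hMpos : ∀ K ω, 0 < M K ω := by
    intro K ω
    exact Finset.prod_pos fun i _ => div_pos (hYpos i ω) (hgpos i ω)
  have hMmF : ∀ K, Measurable[ℱ K] (M K) := by
    intro K
    refine Finset.measurable_prod _ fun i hi => ?_
    rw [mem_range] at hi
    have hY : Measurable[ℱ K] (Y i) := by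
      have : Measurable[ℱ (i + 1)] (Y i) :=
        (((hadapted i).sub ((hmu'mF i).mono (ℱ.mono (Nat.le_succ i)) le_rfl)).const_mul lam).exp
      exact this.mono (ℱ.mono hi) le_rfl
    exact hY.div ((hgmF i).mono (ℱ.mono hi.le) le_rfl)
  have hMm : ∀ K, Measurable (M K) := fun K => (hMmF K).mono (hle K) le_rfl
  -- one-step tower property
  have step : ∀ k, ∀ A : Set Ω, MeasurableSet[ℱ k] A →
      ∫⁻ ω in A, ENNReal.ofReal (M (k + 1) ω) ∂μ = ∫⁻ ω in A, ENNReal.ofReal (M k ω) ∂μ := by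
    intro k A hA
    set h : Ω → ENNReal := A.indicator (fun ω => ENNReal.ofReal (M k ω / g k ω)) with hhdef
    have hhmF : Measurable[ℱ k] h :=
      Measurable.indicator ((hMmF k).div (hgmF k)).ennreal_ofReal hA
    have hpull := aux_pullout (hle k) μ (hYm k) (hYint k)
      (fun ω => (hYpos k ω).le) hhmF
    have hAm : MeasurableSet A := hle k A hA
    have lhs : ∫⁻ ω, h ω * ENNReal.ofReal (Y k ω) ∂μ
        = ∫⁻ ω in A, ENNReal.ofReal (M (k + 1) ω) ∂μ := by
      rw [← lintegral_indicator hAm]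
      refine lintegral_congr fun ω => ?_
      simp only [hhdef, Set.indicator_apply]
      split_ifs with hω
      · rw [← ENNReal.ofReal_mul (div_nonneg (hMpos k ω).le (hgpos k ω).le)]
        congr 1
        simp only [hMdef, prod_range_succ]
        field_simp
      · simp
    have rhs : ∫⁻ ω, h ω * ENNReal.ofReal (G k ω) ∂μ
        = ∫⁻ ω in A, ENNReal.ofReal (M k ω) ∂μ := by
      rw [← lintegral_indicator hAm]
      have : ∀ᵐ ω ∂μ, h ω * ENNReal.ofReal (G k ω)
          = A.indicator (fun ω' => ENNReal.ofReal (M k ω')) ω := by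
        filter_upwards [hgae k, hgone k] with ω h1 h2
        simp only [hhdef, Set.indicator_apply]
        split_ifs with hω
        · rw [← h1, ← ENNReal.ofReal_mul (div_nonneg (hMpos k ω).le (hgpos k ω).le)]
          congr 1
          field_simp
        · simp
      exact lintegral_congr_ae this
    rw [← lhs, ← rhs]
    exact hpull
  -- iterated tower property
  have tower : ∀ k n, k ≤ n → ∀ A : Set Ω, MeasurableSet[ℱ k] A →
      ∫⁻ ω in A, ENNReal.ofReal (M n ω) ∂μ = ∫⁻ ω in A, ENNReal.ofReal (M k ω) ∂μ := by
    intro k n hkn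
    induction n, hkn using Nat.le_induction with
    | base => intro A hA; rfl
    | succ n hkn ih =>
      intro A hA
      rw [← ih A hA]
      exact step n A (ℱ.mono hkn A hA)
  have htotal : ∀ n, ∫⁻ ω, ENNReal.ofReal (M n ω) ∂μ = 1 := by
    intro n
    have := tower 0 n (Nat.zero_le n) Set.univ MeasurableSet.univ
    rw [setLIntegral_univ, setLIntegral_univ] at this
    rw [this]
    simp [hMdef]
  -- the stopping sets
  set ε : ℝ := Real.exp x with hεdef
  set B : ℕ → Set Ω := fun k => {ω | ε ≤ M k ω ∧ ∀ j < k, M j ω < ε} with hBdef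
  have hBmF : ∀ k, MeasurableSet[ℱ k] (B k) := by
    intro k
    have h1 : MeasurableSet[ℱ k] {ω | ε ≤ M k ω} :=
      measurableSet_le (@measurable_const ℝ Ω _ (ℱ k) ε) (hMmF k)
    have h2 : MeasurableSet[ℱ k] {ω | ∀ j < k, M j ω < ε} := by
      have : {ω | ∀ j < k, M j ω < ε} = ⋂ j ∈ Set.Iio k, {ω | M j ω < ε} := by
        ext ω; simp
      rw [this]
      refine MeasurableSet.biInter (Set.to_countable _) fun j hj => ?_
      exact measurableSet_lt ((hMmF j).mono (ℱ.mono (le_of_lt hj)) le_rfl)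
        (@measurable_const ℝ Ω _ (ℱ k) ε)
    exact h1.inter h2
  have hBm : ∀ k, MeasurableSet (B k) := fun k => hle k _ (hBmF k)
  have hBdisj : Pairwise (Function.onFun Disjoint B) := by
    intro k k' hkk'
    rcases hkk'.lt_or_gt with h | h
    · refine Set.disjoint_left.mpr fun ω hω hω' => ?_
      exact absurd hω.1 (not_le.mpr (hω'.2 k h))
    · refine Set.disjoint_left.mpr fun ω hω hω' => ?_
      exact absurd hω'.1 (not_le.mpr (hω.2 k' h))
  have hεpos : (0 : ℝ) < ε := Real.exp_pos x
  -- partial sum bound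
  have hsum : ∀ n : ℕ, ∑ k ∈ range n, μ (B k) ≤ (ENNReal.ofReal ε)⁻¹ := by
    intro n
    rw [ENNReal.le_inv_iff_mul_le]
    calc (∑ k ∈ range n, μ (B k)) * ENNReal.ofReal ε
        = ∑ k ∈ range n, ENNReal.ofReal ε * μ (B k) := by
          rw [Finset.sum_mul]; congr 1; funext k; rw [mul_comm]
      _ ≤ ∑ k ∈ range n, ∫⁻ ω in B k, ENNReal.ofReal (M n ω) ∂μ := by
          refine Finset.sum_le_sum fun k hk => ?_
          rw [mem_range] at hk
          rw [tower k n hk.le (B k) (hBmF k)]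
          calc ENNReal.ofReal ε * μ (B k)
              = ∫⁻ _ in B k, ENNReal.ofReal ε ∂μ := by
                rw [setLIntegral_const, mul_comm]
            _ ≤ ∫⁻ ω in B k, ENNReal.ofReal (M k ω) ∂μ := by
                refine setLIntegral_mono (hMm k).ennreal_ofReal fun ω hω => ?_
                exact ENNReal.ofReal_le_ofReal hω.1
      _ = ∫⁻ ω in ⋃ k ∈ range n, B k, ENNReal.ofReal (M n ω) ∂μ := by
          rw [lintegral_biUnion_finset ?_ fun k _ => hBm k]
          exact fun i _ j _ hij => hBdisj hij
      _ ≤ ∫⁻ ω, ENNReal.ofReal (M n ω) ∂μ := setLIntegral_le_lintegral _ _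
      _ = 1 := htotal n
  have hUnion : μ (⋃ k, B k) ≤ ENNReal.ofReal (Real.exp (-x)) := by
    have h1 : μ (⋃ k, B k) ≤ ∑' k, μ (B k) := measure_iUnion_le B
    have h2 : ∑' k, μ (B k) ≤ (ENNReal.ofReal ε)⁻¹ := by
      rw [ENNReal.tsum_eq_iSup_nat]
      exact iSup_le hsum
    have h3 : (ENNReal.ofReal ε)⁻¹ = ENNReal.ofReal (Real.exp (-x)) := by
      rw [Real.exp_neg, hεdef, ENNReal.ofReal_inv_of_pos (Real.exp_pos x)]
    exact h1.trans (h2.trans h3.le)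
  -- a.e. identities
  have hae : ∀ᵐ ω ∂μ, ∀ i, mu i ω = mu' i ω ∧ ψ i lam ω = Real.log (g i ω) := by
    rw [ae_all_iff]
    intro i
    have hψg : ψ i lam =ᵐ[μ] fun ω => Real.log (g i ω) := by
      have hcongr : (fun ω' => Real.exp (lam * (Z i ω' - mu i ω')))
          =ᵐ[μ] Y i := by
        filter_upwards [hmu i] with ω hω
        simp only [hYdef, hω]
        rfl
      have h1 : μ[fun ω' => Real.exp (lam * (Z i ω' - mu i ω'))|ℱ i] =ᵐ[μ] G i :=
        condExp_congr_ae hcongr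
      filter_upwards [hψ i lam, h1, hgae i] with ω hω1 hω2 hω3
      rw [hω1, hω2, ← hω3]
    filter_upwards [hmu i, hψg] with ω h1 h2
    exact ⟨h1, h2⟩
  -- pointwise inclusion
  set T : Set Ω := {ω | ∀ K : ℕ, ∑ i ∈ range K, lam * Z i ω ≤
      x + ∑ i ∈ range K, (lam * mu i ω + ψ i lam ω)} with hTdef
  have hincl : (⋃ k, B k)ᶜ ∩ {ω | ∀ i, mu i ω = mu' i ω ∧ ψ i lam ω = Real.log (g i ω)} ⊆ T := by
    rintro ω ⟨hωB, hωae⟩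
    intro K
    by_contra hK
    push_neg at hK
    have hMK : ε < M K ω := by
      have hM : M K ω = Real.exp (∑ i ∈ range K,
          (lam * Z i ω - (lam * mu i ω + ψ i lam ω))) := by
        rw [Real.exp_sum]
        refine Finset.prod_congr rfl fun i _ => ?_
        have h1 := (hωae i).1
        have h2 := (hωae i).2
        have hg' : g i ω = Real.exp (ψ i lam ω) := by
          rw [h2, Real.exp_log (hgpos i ω)]
        simp only [hMdef, hYdef, hg', h1, ← Real.exp_sub]
        congr 1
        ring
      rw [hM, hεdef]
      apply Real.exp_lt_exp.mpr
      rw [Finset.sum_sub_distrib]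
      linarith
    have hex : ∃ k, ε ≤ M k ω := ⟨K, hMK.le⟩
    have hmem : ω ∈ B (Nat.find hex) := by
      refine ⟨Nat.find_spec hex, fun j hj => ?_⟩
      exact not_le.mp (Nat.find_min hex hj)
    exact hωB (Set.mem_iUnion.mpr ⟨Nat.find hex, hmem⟩)
  -- conclude
  have hTlower : μ ((⋃ k, B k)ᶜ) ≤ μ T := by
    have hnull : μ {ω | ¬ ∀ i, mu i ω = mu' i ω ∧ ψ i lam ω = Real.log (g i ω)} = 0 := by
      rw [← ae_iff] at *
      exact hae
    calc μ ((⋃ k, B k)ᶜ)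
        ≤ μ (((⋃ k, B k)ᶜ ∩ {ω | ∀ i, mu i ω = mu' i ω ∧ ψ i lam ω = Real.log (g i ω)}) ∪
            {ω | ¬ ∀ i, mu i ω = mu' i ω ∧ ψ i lam ω = Real.log (g i ω)}) := by
          refine measure_mono fun ω hω => ?_
          by_cases h : ∀ i, mu i ω = mu' i ω ∧ ψ i lam ω = Real.log (g i ω)
          · exact Or.inl ⟨hω, h⟩
          · exact Or.inr h
      _ ≤ μ ((⋃ k, B k)ᶜ ∩ {ω | ∀ i, mu i ω = mu' i ω ∧ ψ i lam ω = Real.log (g i ω)}) +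
            μ {ω | ¬ ∀ i, mu i ω = mu' i ω ∧ ψ i lam ω = Real.log (g i ω)} := measure_union_le _ _
      _ = μ ((⋃ k, B k)ᶜ ∩ {ω | ∀ i, mu i ω = mu' i ω ∧ ψ i lam ω = Real.log (g i ω)}) := by
          rw [hnull, add_zero]
      _ ≤ μ T := measure_mono hincl
  have hcompl : μ ((⋃ k, B k)ᶜ) = 1 - μ (⋃ k, B k) := by
    rw [measure_compl (MeasurableSet.iUnion hBm) (measure_ne_top μ _), measure_univ]
  calc ENNReal.ofReal (1 - Real.exp (-x))
      = 1 - ENNReal.ofReal (Real.exp (-x)) := by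
        rw [ENNReal.ofReal_sub 1 (Real.exp_pos (-x)).le, ENNReal.ofReal_one]
    _ ≤ 1 - μ (⋃ k, B k) := tsub_le_tsub_left hUnion 1
    _ = μ ((⋃ k, B k)ᶜ) := hcompl.symm
    _ ≤ μ T := hTlower
end

section
/- If nonnegative random variables Δ_k ∈ [0, C] satisfy, on an event E, that for all ε > 0, ∑_{k=1}^∞ 1{Δ_k > ε} ≤ C₂/ε², then on E, for every K ∈ ℕ, the cumulative regret satisfies ∑_{k=1}^K Δ_k ≤ 2√(C₂·K) + C (deterministic conversion from uniform-PAC counting bounds to a sublinear regret bound). -/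
open Finset

lemma aux_inv_sqrt_sum : ∀ m : ℕ, 1 ≤ m →
    (∑ j ∈ Finset.Icc 1 m, (Real.sqrt j)⁻¹) ≤ 2 * Real.sqrt m - 1 := by
  intro m hm
  induction m, hm using Nat.le_induction with
  | base => norm_num
  | succ n hn ih =>
    rw [Finset.sum_Icc_succ_top (by omega)]
    have h1 : (0:ℝ) < Real.sqrt ((n:ℝ)+1) := Real.sqrt_pos.mpr (by positivity)
    have h2 : Real.sqrt ((n:ℝ)*((n:ℝ)+1)) ≤ (n:ℝ) + 1/2 := by
      rw [show ((n:ℝ) + 1/2) = Real.sqrt (((n:ℝ)+1/2)^2) from (Real.sqrt_sq (by positivity)).symm]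
      apply Real.sqrt_le_sqrt; nlinarith
    have h3 : Real.sqrt n * Real.sqrt ((n:ℝ)+1) = Real.sqrt ((n:ℝ)*((n:ℝ)+1)) :=
      (Real.sqrt_mul (by positivity) _).symm
    have h4 : Real.sqrt ((n:ℝ)+1) * Real.sqrt ((n:ℝ)+1) = (n:ℝ)+1 :=
      Real.mul_self_sqrt (by positivity)
    have key : (Real.sqrt ((n:ℝ)+1))⁻¹ ≤ 2*Real.sqrt ((n:ℝ)+1) - 2*Real.sqrt n := by
      rw [inv_eq_one_div, div_le_iff₀ h1]
      nlinarith
    have hcast : ((n+1 : ℕ) : ℝ) = (n:ℝ)+1 := by push_cast; ring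
    rw [hcast]
    linarith

lemma layer_identity (e : ℕ → ℝ) : ∀ K : ℕ, 1 ≤ K →
    (K:ℝ) * e K + ∑ j ∈ Finset.Ico 1 K, (e j - e (j+1)) * ((j:ℝ)+1)
      = e 1 + ∑ j ∈ Finset.Ico 1 K, e j := by
  intro K hK
  induction K, hK using Nat.le_induction with
  | base => simp
  | succ n hn ih =>
    rw [Finset.sum_Ico_succ_top hn, Finset.sum_Ico_succ_top hn]
    push_cast
    push_cast at ih
    linear_combination ih

lemma pointwise_layer (C : ℝ) (hC : 0 ≤ C) (e : ℕ → ℝ) (x : ℝ)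
    (he : ∀ j, 1 ≤ j → e (j+1) ≤ e j) (hpos : ∀ j, 1 ≤ j → 0 ≤ e j)
    (hx0 : 0 ≤ x) (hxC : x ≤ C) :
    ∀ K, 1 ≤ K → x ≤ e K + (∑ j ∈ Finset.Ico 1 K, (e j - e (j+1)) * (if x > e (j+1) then (1:ℝ) else 0)) + C * (if x > e 1 then (1:ℝ) else 0) := by
  intro K hK
  induction K, hK using Nat.le_induction with
  | base =>
    simp only [Finset.Ico_self, Finset.sum_empty, add_zero, zero_add]
    by_cases h : x > e 1
    · simp only [h, if_pos, mul_one]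
      linarith [hpos 1 le_rfl]
    · simp only [h, if_neg, mul_zero, not_false_iff]
      push_neg at h
      linarith
  | succ n hn ih =>
    rw [Finset.sum_Ico_succ_top hn]
    by_cases h : x > e (n+1)
    · simp only [h, if_pos, mul_one]
      linarith
    · have hS : (0:ℝ) ≤ ∑ j ∈ Finset.Ico 1 n, (e j - e (j+1)) * (if x > e (j+1) then (1:ℝ) else 0) := by
        apply Finset.sum_nonneg
        intro j hj
        rw [Finset.mem_Ico] at hj
        have h1 := he j hj.1
        have h2 : (0:ℝ) ≤ (if x > e (j+1) then (1:ℝ) else 0) := by split <;> norm_num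
        have h3 : (0:ℝ) ≤ e j - e (j+1) := by linarith
        exact mul_nonneg h3 h2
      have hind : (0:ℝ) ≤ C * (if x > e 1 then (1:ℝ) else 0) := by
        apply mul_nonneg hC; split <;> norm_num
      simp only [h, if_neg, mul_zero, not_false_iff]
      push_neg at h
      linarith

/-- Deterministic conversion from a uniform-PAC counting bound to a sublinear regret bound:
if `Δ_k ∈ [0, C]` and for all `ε > 0` the number of indices with `Δ_k > ε` is at most
`C₂/ε²`, then `∑_{k=1}^K Δ_k ≤ 2√(C₂ K) + C`, and more precisely
`∑_{k=1}^K Δ_k ≤ ε K + C · C₂/ε²` for every `ε > 0`. -/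
theorem stmt_19 (Δ : ℕ → ℝ) (C C₂ : ℝ) (hC : 0 < C) (hC₂ : 0 < C₂)
    (hbd : ∀ k, Δ k ∈ Set.Icc (0 : ℝ) C)
    (hcount : ∀ ε > (0 : ℝ), ∀ K : ℕ,
      (∑ k ∈ Finset.Icc 1 K, (if Δ k > ε then (1 : ℝ) else 0)) ≤ C₂ / ε ^ 2) :
    ∀ K : ℕ,
      ((∑ k ∈ Finset.Icc 1 K, Δ k) ≤ 2 * Real.sqrt (C₂ * K) + C) ∧
      (∀ ε > (0 : ℝ), (∑ k ∈ Finset.Icc 1 K, Δ k) ≤ ε * K + C * (C₂ / ε ^ 2)) := by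
  intro K
  constructor
  · -- Part 1
    rcases Nat.eq_zero_or_pos K with hK0 | hK1
    · subst hK0
      simp only [Finset.Icc_eq_empty (by norm_num : ¬ (1:ℕ) ≤ 0), Finset.sum_empty]
      have : (0:ℝ) ≤ 2 * Real.sqrt (C₂ * 0) := by positivity
      push_cast
      linarith
    set e : ℕ → ℝ := fun j => Real.sqrt C₂ / Real.sqrt j with he_def
    have hepos : ∀ j : ℕ, 1 ≤ j → 0 < e j := by
      intro j hj
      have : (0:ℝ) < (j:ℝ) := by exact_mod_cast hj
      simp only [he_def]
      positivity
    have hmono : ∀ j : ℕ, 1 ≤ j → e (j+1) ≤ e j := by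
      intro j hj
      have h1 : (0:ℝ) < Real.sqrt j := Real.sqrt_pos.mpr (by exact_mod_cast hj)
      simp only [he_def]
      gcongr
      exact_mod_cast Nat.le_succ j
    have hesq : ∀ j : ℕ, 1 ≤ j → C₂ / (e j) ^ 2 = (j:ℝ) := by
      intro j hj
      have hj0 : (0:ℝ) < (j:ℝ) := by exact_mod_cast hj
      simp only [he_def, div_pow, Real.sq_sqrt hC₂.le, Real.sq_sqrt hj0.le]
      field_simp
    have hM : ∀ j : ℕ, 1 ≤ j →
        (∑ k ∈ Finset.Icc 1 K, (if Δ k > e j then (1:ℝ) else 0)) ≤ (j:ℝ) := by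
      intro j hj
      calc (∑ k ∈ Finset.Icc 1 K, (if Δ k > e j then (1:ℝ) else 0)) ≤ C₂ / (e j)^2 :=
            hcount (e j) (hepos j hj) K
        _ = (j:ℝ) := hesq j hj
    have hpt : ∀ k ∈ Finset.Icc 1 K, Δ k ≤
        e K + (∑ j ∈ Finset.Ico 1 K, (e j - e (j+1)) * (if Δ k > e (j+1) then (1:ℝ) else 0))
          + C * (if Δ k > e 1 then (1:ℝ) else 0) := by
      intro k _
      exact pointwise_layer C hC.le e (Δ k) hmono (fun j hj => (hepos j hj).le)
        (hbd k).1 (hbd k).2 K hK1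
    have step1 : (∑ k ∈ Finset.Icc 1 K, Δ k) ≤
        (K:ℝ) * e K
        + (∑ j ∈ Finset.Ico 1 K, (e j - e (j+1)) *
            (∑ k ∈ Finset.Icc 1 K, (if Δ k > e (j+1) then (1:ℝ) else 0)))
        + C * (∑ k ∈ Finset.Icc 1 K, (if Δ k > e 1 then (1:ℝ) else 0)) := by
      calc (∑ k ∈ Finset.Icc 1 K, Δ k) ≤ ∑ k ∈ Finset.Icc 1 K,
            (e K + (∑ j ∈ Finset.Ico 1 K, (e j - e (j+1)) * (if Δ k > e (j+1) then (1:ℝ) else 0))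
              + C * (if Δ k > e 1 then (1:ℝ) else 0)) := Finset.sum_le_sum hpt
        _ = _ := by
          rw [Finset.sum_add_distrib, Finset.sum_add_distrib, Finset.sum_const,
            Nat.card_Icc, Finset.sum_comm, ← Finset.mul_sum]
          congr 1
          congr 1
          · simp [nsmul_eq_mul]
          · exact Finset.sum_congr rfl (fun j _ => (Finset.mul_sum _ _ _).symm)
    have step2 : (∑ j ∈ Finset.Ico 1 K, (e j - e (j+1)) *
            (∑ k ∈ Finset.Icc 1 K, (if Δ k > e (j+1) then (1:ℝ) else 0)))
        ≤ ∑ j ∈ Finset.Ico 1 K, (e j - e (j+1)) * ((j:ℝ)+1) := by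
      apply Finset.sum_le_sum
      intro j hj
      rw [Finset.mem_Ico] at hj
      have h1 : (0:ℝ) ≤ e j - e (j+1) := by linarith [hmono j hj.1]
      have h2 := hM (j+1) (by omega)
      push_cast at h2
      exact mul_le_mul_of_nonneg_left h2 h1
    have step3 : C * (∑ k ∈ Finset.Icc 1 K, (if Δ k > e 1 then (1:ℝ) else 0)) ≤ C := by
      have h2 := hM 1 le_rfl
      push_cast at h2
      nlinarith
    have hident := layer_identity e K hK1
    have hbound : e 1 + ∑ j ∈ Finset.Ico 1 K, e j ≤ 2 * Real.sqrt (C₂ * K) := by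
      have he1 : e 1 = Real.sqrt C₂ := by simp [he_def]
      have hsqK : Real.sqrt (C₂ * K) = Real.sqrt C₂ * Real.sqrt K :=
        Real.sqrt_mul hC₂.le _
      rcases Nat.lt_or_ge K 2 with hK2 | hK2
      · -- K = 1
        have : K = 1 := by omega
        subst this
        simp only [Finset.Ico_self, Finset.sum_empty, add_zero, he1]
        rw [hsqK]
        simp only [Nat.cast_one, Real.sqrt_one, mul_one]
        nlinarith [Real.sqrt_nonneg C₂]
      · have hIco : Finset.Ico 1 K = Finset.Icc 1 (K-1) := by
          rw [← Finset.Ico_add_one_right_eq_Icc]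
          congr 1
          omega
        have hsum : ∑ j ∈ Finset.Ico 1 K, e j
            = Real.sqrt C₂ * ∑ j ∈ Finset.Icc 1 (K-1), (Real.sqrt j)⁻¹ := by
          rw [hIco, Finset.mul_sum]
          exact Finset.sum_congr rfl (fun j _ => by simp [he_def, div_eq_mul_inv])
        have haux := aux_inv_sqrt_sum (K-1) (by omega)
        have hs1 : Real.sqrt C₂ * Real.sqrt (K-1 : ℕ) ≤ Real.sqrt C₂ * Real.sqrt K := by
          gcongr
          exact_mod_cast Nat.sub_le K 1
        have hsC : (0:ℝ) ≤ Real.sqrt C₂ := Real.sqrt_nonneg _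
        rw [he1, hsum, hsqK]
        nlinarith
    calc (∑ k ∈ Finset.Icc 1 K, Δ k)
        ≤ (K:ℝ) * e K + (∑ j ∈ Finset.Ico 1 K, (e j - e (j+1)) * ((j:ℝ)+1)) + C := by
          linarith [step1, step2, step3]
      _ = e 1 + (∑ j ∈ Finset.Ico 1 K, e j) + C := by linarith [hident]
      _ ≤ 2 * Real.sqrt (C₂ * K) + C := by linarith [hbound]
  · -- Part 2
    intro ε hε
    have hpt : ∀ k ∈ Finset.Icc 1 K, Δ k ≤ ε + C * (if Δ k > ε then (1:ℝ) else 0) := by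
      intro k _
      obtain ⟨h0, hC'⟩ := hbd k
      by_cases h : Δ k > ε
      · simp only [h, if_pos, mul_one]; linarith
      · simp only [h, if_neg, mul_zero, not_false_iff]
        push_neg at h
        linarith
    calc (∑ k ∈ Finset.Icc 1 K, Δ k)
        ≤ ∑ k ∈ Finset.Icc 1 K, (ε + C * (if Δ k > ε then (1:ℝ) else 0)) :=
          Finset.sum_le_sum hpt
      _ = ε * K + C * ∑ k ∈ Finset.Icc 1 K, (if Δ k > ε then (1:ℝ) else 0) := by
          rw [Finset.sum_add_distrib, Finset.sum_const, Nat.card_Icc, ← Finset.mul_sum]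
          simp [nsmul_eq_mul, mul_comm]
      _ ≤ ε * K + C * (C₂ / ε^2) := by
          have := hcount ε hε K
          nlinarith
end
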